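/- Let F be a finite field of order Q, let L be a set of affine lines in F² (graphs of polynomials of degree less than 2), and let P ⊆ F² be a set of points. Then |I(P,L) − |P||L|/Q| ≤ sqrt(|P||L|Q)·(1 − 1/Q), where I(P,L) counts the incident point-line pairs. -/

import Mathlib

open Finset

lemma helper1 {F : Type*} [Fintype F] [DecidableEq F] (e e' : F) :
    ∑ y : F, (if y = e then (1:ℝ) else 0) * (if y = e' then 1 else 0)
      = if e = e' then 1 else 0 := by
  rcases eq_or_ne e e' with h | h
  · subst h
    simp [mul_ite, ite_mul]
  · rw [if_neg h]
    apply Finset.sum_eq_zero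
    intro y _
    rcases eq_or_ne y e with h1 | h1 <;> rcases eq_or_ne y e' with h2 | h2 <;> simp_all

lemma colcard {F : Type*} [Fintype F] [DecidableEq F] (P : Finset (F × F)) (x : F) :
    ((P.filter (fun p => p.1 = x)).card : ℝ)
      = ∑ y : F, (if (x, y) ∈ P then (1:ℝ) else 0) := by
  rw [Finset.sum_boole]
  norm_num
  apply Finset.card_bij (fun p _ => p.2)
  · intro p hp
    simp only [mem_filter] at hp ⊢
    rw [show (x, p.2) = p by rw [← hp.2]]
    exact ⟨mem_univ _, hp.1⟩
  · intro p hp q hq h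
    simp only [mem_filter] at hp hq
    ext
    · rw [hp.2, hq.2]
    · exact h
  · intro y hy
    simp only [mem_filter, mem_univ] at hy
    exact ⟨(x, y), by simp [hy], rfl⟩

lemma linepair {F : Type*} [Field F] [Fintype F] [DecidableEq F] (l l' : F × F) :
    ∑ x : F, (if l.1 * x + l.2 = l'.1 * x + l'.2 then (1:ℝ) else 0)
      ≤ if l = l' then (Fintype.card F : ℝ) else 1 := by
  rcases eq_or_ne l l' with h | h
  · subst h; simp
  · rw [if_neg h, Finset.sum_boole]
    have : (Finset.filter (fun x => l.1 * x + l.2 = l'.1 * x + l'.2) univ).card ≤ 1 := by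
      apply Finset.card_le_one.2
      intro a ha b hb
      simp only [mem_filter, mem_univ, true_and] at ha hb
      rcases eq_or_ne l.1 l'.1 with h1 | h1
      · exfalso
        rw [h1] at ha
        have h2 : l.2 = l'.2 := add_left_cancel ha
        exact h (Prod.ext h1 h2)
      · have ha' : (l.1 - l'.1) * a = l'.2 - l.2 := by linear_combination ha
        have hb' : (l.1 - l'.1) * b = l'.2 - l.2 := by linear_combination hb
        exact mul_left_cancel₀ (sub_ne_zero.2 h1) (ha'.trans hb'.symm)
    exact_mod_cast Nat.cast_le_one.mpr this

theorem stmt13 {F : Type*} [Field F] [Fintype F] [DecidableEq F] (Q : ℕ)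
    (hQ : Fintype.card F = Q)
    (P : Finset (F × F)) (L : Finset (F × F)) :
    -- a line is (a, b), i.e. the graph of y = a·x + b; I(P,L) counts incident pairs
    |((((P ×ˢ L).filter (fun t : (F × F) × (F × F) =>
          t.1.2 = t.2.1 * t.1.1 + t.2.2)).card : ℝ)
        - (P.card : ℝ) * L.card / Q)|
      ≤ Real.sqrt ((P.card : ℝ) * L.card * Q) * (1 - 1 / Q) := by
  subst hQ
  set q : ℝ := (Fintype.card F : ℝ) with hqdef
  have hq1 : (1:ℝ) ≤ q := by
    have := Fintype.card_pos (α := F)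
    rw [hqdef]
    exact_mod_cast this
  have hqpos : (0:ℝ) < q := lt_of_lt_of_le one_pos hq1
  have hq0 : q ≠ 0 := ne_of_gt hqpos
  have hoq : (0:ℝ) ≤ 1 - 1/q := by
    have : 1/q ≤ 1 := by
      rw [div_le_one hqpos]; exact hq1
    linarith
  set χ : F × F → F × F → ℝ := fun p l => if p.2 = l.1 * p.1 + l.2 then 1 else 0 with hχ
  set v : F × F → ℝ := fun p => ∑ l ∈ L, (χ p l - 1/q) with hv
  set m : F → ℝ := fun x => ((P.filter (fun p => p.1 = x)).card : ℝ) with hm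
  set u : F × F → ℝ := fun p => (if p ∈ P then (1:ℝ) else 0) - m p.1 / q with hu
  -- Step A: incidence count as double sum
  have hI : ((((P ×ˢ L).filter (fun t : (F × F) × (F × F) =>
          t.1.2 = t.2.1 * t.1.1 + t.2.2)).card : ℕ) : ℝ) = ∑ p ∈ P, ∑ l ∈ L, χ p l := by
    rw [Finset.card_filter]
    push_cast
    rw [Finset.sum_product]
  -- Step B
  have hE : ((((P ×ˢ L).filter (fun t : (F × F) × (F × F) =>
          t.1.2 = t.2.1 * t.1.1 + t.2.2)).card : ℕ) : ℝ) - (P.card : ℝ) * L.card / q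
        = ∑ p ∈ P, v p := by
    rw [hI]
    simp only [hv, Finset.sum_sub_distrib, Finset.sum_const, nsmul_eq_mul]
    ring
  -- Step C: columns of v sum to zero
  have hcol : ∀ x : F, ∑ y : F, v (x, y) = 0 := by
    intro x
    simp only [hv]
    rw [Finset.sum_comm]
    apply Finset.sum_eq_zero
    intro l _
    simp only [hχ]
    rw [Finset.sum_sub_distrib]
    have h2 : ∑ y : F, (if y = l.1 * x + l.2 then (1:ℝ) else 0) = 1 := by simp
    rw [h2, Finset.sum_const, card_univ, nsmul_eq_mul]
    rw [← hqdef]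
    field_simp
    norm_num
  -- Step D
  have hD : ∑ p ∈ P, v p = ∑ p : F × F, u p * v p := by
    simp only [hu, sub_mul]
    rw [Finset.sum_sub_distrib]
    have h1 : ∑ p : F × F, (if p ∈ P then (1:ℝ) else 0) * v p = ∑ p ∈ P, v p := by
      simp only [ite_mul, one_mul, zero_mul]
      rw [Finset.sum_ite_mem, univ_inter]
    have h2 : ∑ p : F × F, (m p.1 / q) * v p = 0 := by
      rw [Fintype.sum_prod_type]
      apply Finset.sum_eq_zero
      intro x _
      show ∑ y : F, m x / q * v (x, y) = 0
      rw [← Finset.mul_sum, hcol x, mul_zero]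
    rw [h1, h2, sub_zero]
  -- Step E : sum of u^2
  have hmx : ∀ x, m x = ∑ y : F, (if (x, y) ∈ P then (1:ℝ) else 0) := fun x => colcard P x
  have hmsum : ∑ x : F, m x = (P.card : ℝ) := by
    simp only [hm]
    rw [← Nat.cast_sum]
    congr 1
    exact (Finset.card_eq_sum_card_fiberwise (fun p _ => mem_univ p.1)).symm
  have hmle : ∀ x, m x ≤ (m x)^2 := by
    intro x
    simp only [hm]
    have : ((P.filter (fun p => p.1 = x)).card : ℝ) ^ 2
        = (((P.filter (fun p => p.1 = x)).card ^ 2 : ℕ) : ℝ) := by push_cast; ring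
    rw [this]
    exact_mod_cast Nat.le_self_pow two_ne_zero _
  have hu2 : ∀ x, ∑ y : F, (u (x, y))^2 = m x - (m x)^2 / q := by
    intro x
    have e1 : ∑ y : F, ((if (x, y) ∈ P then (1:ℝ) else 0))^2 = m x := by
      rw [hmx x]
      apply Finset.sum_congr rfl
      intro y _
      split <;> norm_num
    calc ∑ y : F, (u (x, y))^2
        = ∑ y : F, (((if (x, y) ∈ P then (1:ℝ) else 0))^2
            - 2 * (m x / q) * (if (x, y) ∈ P then (1:ℝ) else 0) + (m x / q)^2) := by
          apply Finset.sum_congr rfl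
          intro y _
          simp only [hu]
          ring
      _ = m x - 2 * (m x / q) * (m x) + q * (m x / q)^2 := by
          rw [Finset.sum_add_distrib, Finset.sum_sub_distrib, e1, ← Finset.mul_sum,
            ← hmx x, Finset.sum_const, card_univ, nsmul_eq_mul, ← hqdef]
      _ = m x - (m x)^2 / q := by field_simp; ring
  have hU : ∑ p : F × F, (u p)^2 ≤ (P.card : ℝ) * (1 - 1/q) := by
    rw [Fintype.sum_prod_type]
    calc ∑ x : F, ∑ y : F, (u (x, y))^2 = ∑ x : F, (m x - (m x)^2 / q) :=
          Finset.sum_congr rfl (fun x _ => hu2 x)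
      _ ≤ ∑ x : F, m x * (1 - 1/q) := by
          apply Finset.sum_le_sum
          intro x _
          have key : m x / q ≤ (m x)^2 / q := (div_le_div_iff_of_pos_right hqpos).2 (hmle x)
          have : m x * (1 - 1/q) = m x - m x / q := by ring
          linarith
      _ = (∑ x : F, m x) * (1 - 1/q) := (Finset.sum_mul _ _ _).symm
      _ = (P.card : ℝ) * (1 - 1/q) := by rw [hmsum]
  -- Step F : sum of v^2
  have hrow : ∀ l : F × F, ∑ p : F × F, χ p l = q := by
    intro l
    rw [Fintype.sum_prod_type]
    have : ∀ x : F, ∑ y : F, χ (x, y) l = 1 := by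
      intro x
      simp [hχ]
    rw [Finset.sum_congr rfl (fun x _ => this x), Finset.sum_const, card_univ, nsmul_eq_mul,
      mul_one, ← hqdef]
  have hprod : ∀ l l' : F × F, ∑ p : F × F, χ p l * χ p l' ≤ if l = l' then q else 1 := by
    intro l l'
    rw [Fintype.sum_prod_type]
    calc ∑ x : F, ∑ y : F, χ (x, y) l * χ (x, y) l'
        = ∑ x : F, (if l.1 * x + l.2 = l'.1 * x + l'.2 then (1:ℝ) else 0) := by
          apply Finset.sum_congr rfl
          intro x _
          simp only [hχ]
          exact helper1 _ _
      _ ≤ if l = l' then q else 1 := linepair l l'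
  have hV : ∑ p : F × F, (v p)^2 ≤ (L.card : ℝ) * (q - 1) := by
    have expand : ∑ p : F × F, (v p)^2
        = ∑ l ∈ L, ∑ l' ∈ L, ((∑ p : F × F, χ p l * χ p l') - 1) := by
      simp only [hv, sq, Finset.sum_mul_sum]
      rw [Finset.sum_comm]
      apply Finset.sum_congr rfl
      intro l _
      rw [Finset.sum_comm]
      apply Finset.sum_congr rfl
      intro l' _
      have hcard : ((Finset.univ : Finset (F × F)).card : ℝ) = q * q := by
        rw [card_univ, Fintype.card_prod]
        push_cast
        rw [← hqdef]
      have : ∀ p : F × F, (χ p l - 1/q) * (χ p l' - 1/q)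
          = χ p l * χ p l' - (1/q) * χ p l - (1/q) * χ p l' + (1/q) * (1/q) := by
        intro p; ring
      rw [Finset.sum_congr rfl (fun p _ => this p)]
      rw [Finset.sum_add_distrib, Finset.sum_sub_distrib, Finset.sum_sub_distrib,
        ← Finset.mul_sum, ← Finset.mul_sum, hrow l, hrow l', Finset.sum_const, nsmul_eq_mul,
        hcard]
      field_simp
      ring
    rw [expand]
    calc ∑ l ∈ L, ∑ l' ∈ L, ((∑ p : F × F, χ p l * χ p l') - 1)
        ≤ ∑ l ∈ L, ∑ l' ∈ L, ((if l = l' then q else 1) - 1) := by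
          apply Finset.sum_le_sum
          intro l _
          apply Finset.sum_le_sum
          intro l' _
          exact sub_le_sub_right (hprod l l') 1
      _ = ∑ l ∈ L, (q - 1) := by
          apply Finset.sum_congr rfl
          intro l hl
          have : ∀ l' : F × F, (if l = l' then q else 1) - 1 = if l = l' then q - 1 else 0 := by
            intro l'; split <;> ring
          rw [Finset.sum_congr rfl (fun l' _ => this l'), Finset.sum_ite_eq, if_pos hl]
      _ = (L.card : ℝ) * (q - 1) := by rw [Finset.sum_const, nsmul_eq_mul]
  -- combine
  rw [hE, hD]
  have hcs := Finset.sum_mul_sq_le_sq_mul_sq univ u v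
  have hVnn : (0:ℝ) ≤ ∑ p : F × F, (v p)^2 := Finset.sum_nonneg (fun p _ => sq_nonneg _)
  have hUnn : (0:ℝ) ≤ (P.card : ℝ) * (1 - 1/q) := mul_nonneg (Nat.cast_nonneg _) hoq
  have hsq : (∑ p : F × F, u p * v p)^2 ≤ ((P.card : ℝ) * (L.card : ℝ) * q) * (1 - 1/q)^2 := by
    have h1 : (∑ p : F × F, u p * v p)^2 ≤ ((P.card : ℝ) * (1 - 1/q)) * ((L.card : ℝ) * (q - 1)) :=
      hcs.trans (mul_le_mul hU hV hVnn hUnn)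
    have h2 : ((P.card : ℝ) * (1 - 1/q)) * ((L.card : ℝ) * (q - 1))
        = ((P.card : ℝ) * (L.card : ℝ) * q) * (1 - 1/q)^2 := by
      rw [← show q * (1 - 1/q) = q - 1 by rw [mul_sub, mul_one, mul_one_div_cancel hq0]]
      ring
    linarith [h1, h2.symm.le, h2.le]
  calc |∑ p : F × F, u p * v p| = Real.sqrt ((∑ p : F × F, u p * v p)^2) :=
        (Real.sqrt_sq_eq_abs _).symm
    _ ≤ Real.sqrt (((P.card : ℝ) * (L.card : ℝ) * q) * (1 - 1/q)^2) := Real.sqrt_le_sqrt hsq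
    _ = Real.sqrt ((P.card : ℝ) * (L.card : ℝ) * q) * Real.sqrt ((1 - 1/q)^2) :=
        Real.sqrt_mul (mul_nonneg (mul_nonneg (Nat.cast_nonneg _) (Nat.cast_nonneg _)) hqpos.le) _
    _ = Real.sqrt ((P.card : ℝ) * (L.card : ℝ) * q) * (1 - 1/q) := by
        rw [Real.sqrt_sq hoq]
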